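/- Let G be of even order and H of odd order, both connected, such that G has at least one vertex of even degree and H has at least one vertex of odd degree. Then γ_coe(G + H) = |E_V(G)| + |O_V(H)|, where E_V(G) is the set of even-degree vertices of G and O_V(H) is the set of odd-degree vertices of H. -/
import Mathlib


open SimpleGraph

/-- `D` is a dominating set of `G`. -/
def IsDomSet {V : Type*} (G : SimpleGraph V) (D : Set V) : Prop :=
  ∀ v ∉ D, ∃ u ∈ D, G.Adj u v

/-- `D` is a co-even dominating set of `G`: a dominating set such that
every vertex outside `D` has even degree. -/
def IsCoEvenDomSet {V : Type*} (G : SimpleGraph V) (D : Set V) : Prop :=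
  IsDomSet G D ∧ ∀ v ∉ D, Even (G.neighborSet v).ncard

/-- The domination number. -/
noncomputable def gammaD {V : Type*} (G : SimpleGraph V) : ℕ :=
  sInf {n | ∃ D : Set V, IsDomSet G D ∧ D.ncard = n}

/-- The co-even domination number. -/
noncomputable def gammaCoe {V : Type*} (G : SimpleGraph V) : ℕ :=
  sInf {n | ∃ D : Set V, IsCoEvenDomSet G D ∧ D.ncard = n}

/-- The set of vertices of odd degree. -/
def oddVerts {V : Type*} (G : SimpleGraph V) : Set V :=
  {v | Odd (G.neighborSet v).ncard}

/-- The set of vertices of even degree. -/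
def evenVerts {V : Type*} (G : SimpleGraph V) : Set V :=
  {v | Even (G.neighborSet v).ncard}

/-- The join `G + H` of two graphs. -/
def joinG {V W : Type*} (G : SimpleGraph V) (H : SimpleGraph W) : SimpleGraph (V ⊕ W) :=
  SimpleGraph.fromRel (fun a b =>
    match a, b with
    | Sum.inl u, Sum.inl v => G.Adj u v
    | Sum.inr u, Sum.inr v => H.Adj u v
    | _, _ => True)

/-- The corona `G ∘ H`: one copy of `G` and `|V(G)|` copies of `H`,
joining the `i`-th vertex of `G` to every vertex of the `i`-th copy of `H`. -/
def corona {V W : Type*} (G : SimpleGraph V) (H : SimpleGraph W) : SimpleGraph (V ⊕ V × W) :=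
  SimpleGraph.fromRel (fun a b =>
    match a, b with
    | Sum.inl u, Sum.inl v => G.Adj u v
    | Sum.inr u, Sum.inr v => u.1 = v.1 ∧ H.Adj u.2 v.2
    | Sum.inl u, Sum.inr v => u = v.1
    | Sum.inr _, Sum.inl _ => False)

/-- The neighbourhood corona `G ⋆ H`: one copy of `G` and `|V(G)|` copies of `H`,
joining every neighbour of the `i`-th vertex of `G` to every vertex of the
`i`-th copy of `H`. -/
def ncorona {V W : Type*} (G : SimpleGraph V) (H : SimpleGraph W) : SimpleGraph (V ⊕ V × W) :=
  SimpleGraph.fromRel (fun a b =>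
    match a, b with
    | Sum.inl u, Sum.inl v => G.Adj u v
    | Sum.inr u, Sum.inr v => u.1 = v.1 ∧ H.Adj u.2 v.2
    | Sum.inl u, Sum.inr v => G.Adj u v.1
    | Sum.inr _, Sum.inl _ => False)

/-- The Hajós sum `G₁(x₁y₁) +_H G₂(x₂y₂)`: delete edges `x₁y₁` and `x₂y₂`,
identify `x₁` with `x₂` (represented here by `Sum.inr x₂`), and add the edge `y₁y₂`. -/
def hajos {V₁ V₂ : Type*} (G₁ : SimpleGraph V₁) (G₂ : SimpleGraph V₂)
    (x₁ y₁ : V₁) (x₂ y₂ : V₂) : SimpleGraph ({v : V₁ // v ≠ x₁} ⊕ V₂) :=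
  SimpleGraph.fromRel (fun a b =>
    match a, b with
    | Sum.inl u, Sum.inl v => G₁.Adj u.1 v.1
    | Sum.inr u, Sum.inr v => G₂.Adj u v ∧ ¬(u = x₂ ∧ v = y₂) ∧ ¬(u = y₂ ∧ v = x₂)
    | Sum.inl u, Sum.inr v => (v = x₂ ∧ G₁.Adj x₁ u.1 ∧ u.1 ≠ y₁) ∨ (u.1 = y₁ ∧ v = y₂)
    | Sum.inr _, Sum.inl _ => False)


section Aux

variable {V W : Type*} [Fintype V] [Fintype W] (G : SimpleGraph V) (H : SimpleGraph W)

lemma join_adj_ll (u v : V) : (joinG G H).Adj (Sum.inl u) (Sum.inl v) ↔ G.Adj u v := by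
  constructor
  · rintro ⟨hne, h | h⟩
    · exact h
    · exact h.symm
  · intro h
    exact ⟨by simp [h.ne], Or.inl h⟩

lemma join_adj_rr (u v : W) : (joinG G H).Adj (Sum.inr u) (Sum.inr v) ↔ H.Adj u v := by
  constructor
  · rintro ⟨hne, h | h⟩
    · exact h
    · exact h.symm
  · intro h
    exact ⟨by simp [h.ne], Or.inl h⟩

lemma join_adj_lr (u : V) (w : W) : (joinG G H).Adj (Sum.inl u) (Sum.inr w) := by
  exact ⟨by simp, Or.inl trivial⟩

lemma join_nbhd_l (v : V) :
    (joinG G H).neighborSet (Sum.inl v) =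
      Sum.inl '' G.neighborSet v ∪ Sum.inr '' Set.univ := by
  ext a
  cases a with
  | inl u =>
      simp [SimpleGraph.mem_neighborSet, (joinG G H).adj_comm, join_adj_ll]
  | inr w =>
      simp [SimpleGraph.mem_neighborSet, (joinG G H).adj_comm, join_adj_lr]

lemma join_nbhd_r (w : W) :
    (joinG G H).neighborSet (Sum.inr w) =
      Sum.inl '' Set.univ ∪ Sum.inr '' H.neighborSet w := by
  ext a
  cases a with
  | inl u =>
      simp [SimpleGraph.mem_neighborSet, (joinG G H).adj_comm, join_adj_lr]
  | inr w' =>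
      simp [SimpleGraph.mem_neighborSet, (joinG G H).adj_comm, join_adj_rr]

lemma ncard_union_images (A : Set V) (B : Set W) :
    ((Sum.inl '' A ∪ Sum.inr '' B : Set (V ⊕ W))).ncard = A.ncard + B.ncard := by
  rw [Set.ncard_union_eq, Set.ncard_image_of_injective _ Sum.inl_injective,
    Set.ncard_image_of_injective _ Sum.inr_injective]
  all_goals first
    | (rw [Set.disjoint_iff_inter_eq_empty]; ext a; cases a <;> simp)
    | exact Set.toFinite _

lemma join_ncard_l (v : V) :
    ((joinG G H).neighborSet (Sum.inl v)).ncard = (G.neighborSet v).ncard + Fintype.card W := by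
  rw [join_nbhd_l, ncard_union_images, Set.ncard_univ, Nat.card_eq_fintype_card]

lemma join_ncard_r (w : W) :
    ((joinG G H).neighborSet (Sum.inr w)).ncard = Fintype.card V + (H.neighborSet w).ncard := by
  rw [join_nbhd_r, ncard_union_images, Set.ncard_univ, Nat.card_eq_fintype_card]

end Aux

theorem stmt8 {V W : Type*} [Fintype V] [Fintype W]
    (G : SimpleGraph V) (H : SimpleGraph W)
    (hG : G.Connected) (hH : H.Connected)
    (hV : Even (Fintype.card V)) (hW : Odd (Fintype.card W))
    (hEG : ∃ v, Even (G.neighborSet v).ncard)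
    (hOH : ∃ w, Odd (H.neighborSet w).ncard) :
    gammaCoe (joinG G H) = (evenVerts G).ncard + (oddVerts H).ncard := by
  classical
  set D : Set (V ⊕ W) := Sum.inl '' evenVerts G ∪ Sum.inr '' oddVerts H with hD
  obtain ⟨v0, hv0⟩ := hEG
  obtain ⟨w0, hw0⟩ := hOH
  obtain ⟨m, hm⟩ := hV
  obtain ⟨k, hk⟩ := hW
  -- parity characterization: a ∈ D ↔ odd degree in join
  have hpar : ∀ a : V ⊕ W, a ∈ D ↔ Odd (((joinG G H).neighborSet a).ncard) := by
    rintro (u | w)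
    · rw [join_ncard_l]
      simp only [hD, Set.mem_union, Set.mem_image]
      constructor
      · rintro (⟨x, hx, hxu⟩ | ⟨x, _, hxu⟩)
        · obtain rfl : x = u := Sum.inl_injective hxu
          obtain ⟨n, hn⟩ := hx
          exact ⟨n + k, by omega⟩
        · exact absurd hxu (by simp)
      · rintro ⟨n, hn⟩
        refine Or.inl ⟨u, ?_, rfl⟩
        have : (G.neighborSet u).ncard % 2 = 0 := by omega
        exact (Nat.even_iff.mpr this)
    · rw [join_ncard_r]
      simp only [hD, Set.mem_union, Set.mem_image]
      constructor
      · rintro (⟨x, _, hxu⟩ | ⟨x, hx, hxu⟩)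
        · exact absurd hxu (by simp)
        · obtain rfl : x = w := Sum.inr_injective hxu
          obtain ⟨n, hn⟩ := hx
          exact ⟨m + n, by omega⟩
      · rintro ⟨n, hn⟩
        refine Or.inr ⟨w, ?_, rfl⟩
        have : (H.neighborSet w).ncard % 2 = 1 := by omega
        exact (Nat.odd_iff.mpr this)
  have hDcard : D.ncard = (evenVerts G).ncard + (oddVerts H).ncard :=
    ncard_union_images _ _
  have hDce : IsCoEvenDomSet (joinG G H) D := by
    constructor
    · rintro (u | w) ha
      · refine ⟨Sum.inr w0, ?_, ?_⟩
        · exact Or.inr ⟨w0, hw0, rfl⟩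
        · exact ((joinG G H).adj_comm _ _).mp (join_adj_lr G H u w0)
      · refine ⟨Sum.inl v0, ?_, ?_⟩
        · exact Or.inl ⟨v0, hv0, rfl⟩
        · exact join_adj_lr G H v0 w
    · intro a ha
      rcases Nat.even_or_odd (((joinG G H).neighborSet a).ncard) with h | h
      · exact h
      · exact absurd ((hpar a).mpr h) ha
  apply le_antisymm
  · exact Nat.sInf_le ⟨D, hDce, by rw [hDcard]⟩
  · refine le_csInf ⟨D.ncard, D, hDce, rfl⟩ ?_
    rintro n ⟨D', hD', rfl⟩
    rw [← hDcard]
    refine Set.ncard_le_ncard ?_ (Set.toFinite _)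
    intro a ha
    by_contra h
    exact (Nat.not_odd_iff_even.mpr (hD'.2 a h)) ((hpar a).mp ha)
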